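/- Let λ ∈ ℂ with |λ| = 1 and let g : ℝ → ℂ be a function with ∑_{k ∈ ℤ} |g(x - k)| < ∞ for each x, decaying so that both series below converge. Suppose f : ℝ → ℂ tends to 0 at ±∞ and satisfies f(x+1) = λ·f(x) + g(x) for all x. Then ∑_{k ∈ ℤ} λᵏ·g(x - k) = 0 for every x ∈ ℝ. -/

import Mathlib

open Filter Finset

theorem stmt_18 (l : ℂ) (hl : ‖l‖ = 1) (g : ℝ → ℂ)
    (hsum : ∀ x : ℝ, Summable (fun k : ℤ => ‖g (x - k)‖))
    (f : ℝ → ℂ) (hvan : Filter.Tendsto f (Filter.cocompact ℝ) (nhds 0))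
    (heq : ∀ x : ℝ, f (x + 1) = l * f x + g x) :
    ∀ x : ℝ, ∑' k : ℤ, l ^ k * g (x - k) = 0 := by
  have hl0 : l ≠ 0 := by intro h; simp [h] at hl
  have hnorm : ∀ (k : ℤ) (y : ℂ), ‖l ^ k * y‖ = ‖y‖ := by
    intro k y; rw [norm_mul, norm_zpow, hl, one_zpow, one_mul]
  have hatTop : (atTop : Filter ℝ) ≤ cocompact ℝ := by
    rw [cocompact_eq_atBot_atTop]; exact le_sup_right
  have hatBot : (atBot : Filter ℝ) ≤ cocompact ℝ := by
    rw [cocompact_eq_atBot_atTop]; exact le_sup_left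
  -- limit of f along x + n
  have hpos : ∀ x : ℝ, Tendsto (fun n : ℕ => f (x + n)) atTop (nhds 0) := by
    intro x
    exact hvan.comp (((tendsto_atTop_add_const_left _ x
      tendsto_natCast_atTop_atTop).mono_right hatTop))
  have hneg : ∀ x : ℝ, Tendsto (fun n : ℕ => f (x - n + 1)) atTop (nhds 0) := by
    intro x
    have : Tendsto (fun n : ℕ => x - (n : ℝ) + 1) atTop atBot := by
      have h1 : Tendsto (fun n : ℕ => -(n : ℝ)) atTop atBot :=
        tendsto_neg_atTop_atBot.comp tendsto_natCast_atTop_atTop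
      have := tendsto_atBot_add_const_left _ (x + 1) h1
      convert this using 2 with n
      ring
    exact hvan.comp (this.mono_right hatBot)
  -- forward series
  have fwd : ∀ x : ℝ, HasSum (fun j : ℕ => l ^ (-1 - (j:ℤ)) * g (x + j)) (-f x) := by
    intro x
    have hsummable : Summable (fun j : ℕ => l ^ (-1 - (j:ℤ)) * g (x + j)) := by
      apply Summable.of_norm
      have hinj : Function.Injective (fun j : ℕ => -(j:ℤ)) := by
        intro a b h; simpa using h
      have hc := (hsum x).comp_injective hinj
      convert hc using 2 with j
      case e'_3 => rfl
      rw [hnorm]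
      congr 2
      push_cast
      ring
    obtain ⟨a, ha⟩ := hsummable
    have key : ∀ n : ℕ, ∑ j ∈ range n, l ^ (-1 - (j:ℤ)) * g (x + j)
        = l ^ (-(n:ℤ)) * f (x + n) - f x := by
      intro n
      have hterm : ∀ j : ℕ, l ^ (-1 - (j:ℤ)) * g (x + j)
          = l ^ (-((j+1:ℕ):ℤ)) * f (x + (j+1:ℕ)) - l ^ (-(j:ℤ)) * f (x + j) := by
        intro j
        have hg : g (x + j) = f (x + j + 1) - l * f (x + j) := by
          rw [heq (x + j)]; ring
        have e1 : l ^ (-1 - (j:ℤ)) * l = l ^ (-(j:ℤ)) := by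
          rw [show (-(j:ℤ)) = (-1 - (j:ℤ)) + 1 by ring, zpow_add_one₀ hl0]
        have e2 : (-((j+1:ℕ):ℤ)) = -1 - (j:ℤ) := by push_cast; ring
        have e3 : x + ((j+1:ℕ):ℝ) = x + j + 1 := by push_cast; ring
        rw [hg, e2, e3]
        rw [mul_sub, ← mul_assoc, e1]
      calc ∑ j ∈ range n, l ^ (-1 - (j:ℤ)) * g (x + j)
          = ∑ j ∈ range n, (l ^ (-((j+1:ℕ):ℤ)) * f (x + (j+1:ℕ))
              - l ^ (-(j:ℤ)) * f (x + j)) := by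
            exact Finset.sum_congr rfl (fun j _ => hterm j)
        _ = l ^ (-(n:ℤ)) * f (x + n) - l ^ (-(0:ℕ):ℤ) * f (x + (0:ℕ)) :=
            Finset.sum_range_sub (fun j : ℕ => l ^ (-(j:ℤ)) * f (x + j)) n
        _ = l ^ (-(n:ℤ)) * f (x + n) - f x := by norm_num
    have hlim : Tendsto (fun n : ℕ => l ^ (-(n:ℤ)) * f (x + n) - f x) atTop
        (nhds (0 - f x)) := by
      apply Tendsto.sub_const
      rw [tendsto_zero_iff_norm_tendsto_zero]
      simp only [hnorm]
      have := (hpos x).norm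
      simpa using this
    have hps := ha.tendsto_sum_nat
    rw [show (fun n : ℕ => ∑ j ∈ range n, l ^ (-1 - (j:ℤ)) * g (x + j))
        = fun n : ℕ => l ^ (-(n:ℤ)) * f (x + n) - f x from funext key] at hps
    have : a = 0 - f x := tendsto_nhds_unique hps hlim
    rw [this, zero_sub] at ha
    exact ha
  -- backward series
  have bwd : ∀ x : ℝ, HasSum (fun n : ℕ => l ^ ((n:ℕ):ℤ) * g (x - n)) (f (x + 1)) := by
    intro x
    have hsummable : Summable (fun n : ℕ => l ^ ((n:ℕ):ℤ) * g (x - n)) := by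
      apply Summable.of_norm
      have hc := (hsum x).comp_injective (fun a b h => by simpa using h :
        Function.Injective (fun j : ℕ => (j:ℤ)))
      convert hc using 2 with j
      case e'_3 => rfl
      rw [hnorm]
      norm_num
    obtain ⟨a, ha⟩ := hsummable
    have key : ∀ n : ℕ, ∑ j ∈ range n, l ^ ((j:ℕ):ℤ) * g (x - j)
        = f (x + 1) - l ^ ((n:ℕ):ℤ) * f (x - n + 1) := by
      intro n
      have hterm : ∀ j : ℕ, l ^ ((j:ℕ):ℤ) * g (x - j)
          = l ^ ((j:ℕ):ℤ) * f (x - j + 1) - l ^ (((j+1:ℕ):ℕ):ℤ) * f (x - (j+1:ℕ) + 1) := by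
        intro j
        have hg : g (x - j) = f (x - j + 1) - l * f (x - j) := by
          rw [heq (x - j)]; ring
        have e1 : l ^ (((j+1:ℕ):ℕ):ℤ) = l ^ ((j:ℕ):ℤ) * l := by
          rw [show (((j+1:ℕ):ℕ):ℤ) = ((j:ℕ):ℤ) + 1 by push_cast; ring, zpow_add_one₀ hl0]
        have e3 : x - ((j+1:ℕ):ℝ) + 1 = x - j := by push_cast; ring
        rw [hg, e1, e3]
        ring
      calc ∑ j ∈ range n, l ^ ((j:ℕ):ℤ) * g (x - j)
          = ∑ j ∈ range n, (l ^ ((j:ℕ):ℤ) * f (x - j + 1)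
              - l ^ (((j+1:ℕ):ℕ):ℤ) * f (x - (j+1:ℕ) + 1)) :=
            Finset.sum_congr rfl (fun j _ => hterm j)
        _ = l ^ (((0:ℕ):ℕ):ℤ) * f (x - (0:ℕ) + 1) - l ^ ((n:ℕ):ℤ) * f (x - n + 1) :=
            Finset.sum_range_sub' (fun j : ℕ => l ^ ((j:ℕ):ℤ) * f (x - j + 1)) n
        _ = f (x + 1) - l ^ ((n:ℕ):ℤ) * f (x - n + 1) := by norm_num
    have hlim : Tendsto (fun n : ℕ => f (x + 1) - l ^ ((n:ℕ):ℤ) * f (x - n + 1)) atTop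
        (nhds (f (x + 1) - 0)) := by
      apply Tendsto.const_sub
      rw [tendsto_zero_iff_norm_tendsto_zero]
      simp only [hnorm]
      have := (hneg x).norm
      simpa using this
    have hps := ha.tendsto_sum_nat
    rw [show (fun n : ℕ => ∑ j ∈ range n, l ^ ((j:ℕ):ℤ) * g (x - j))
        = fun n : ℕ => f (x + 1) - l ^ ((n:ℕ):ℤ) * f (x - n + 1) from funext key] at hps
    have : a = f (x + 1) - 0 := tendsto_nhds_unique hps hlim
    rw [this, sub_zero] at ha
    exact ha
  -- combine
  intro x
  have h1 : HasSum (fun n : ℕ => l ^ ((n:ℕ):ℤ) * g (x - ((n:ℕ):ℤ))) (f (x + 1)) := by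
    simpa using bwd x
  have h2 := fwd (x + 1)
  have h2' : HasSum (fun n : ℕ => l ^ (-((n:ℤ)+1)) * g (x - ((-((n:ℤ)+1)):ℤ))) (-f (x + 1)) := by
    convert h2 using 2 with n
    congr 1
    · congr 1; ring
    · congr 1; push_cast; ring
  have hz : HasSum (fun k : ℤ => l ^ k * g (x - k)) (f (x + 1) + -f (x + 1)) :=
    HasSum.of_nat_of_neg_add_one h1 h2'
  rw [add_neg_cancel] at hz
  exact hz.tsum_eq
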